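/- Under the setting of Lemma 4.4 with ladder epochs (σ_n) of (S_n + cn) (descending for part (a)), the backward iterations satisfy X̂_{σ_n} = Σ_{k=1}^{σ_n} Π_{k-1} Q_k ≤ Σ_{k=1}^{n} γ^{σ_{k-1}} Q*_k a.s. for all n, where Q*_k := Σ_{j=1}^{σ_k - σ_{k-1}} (Π_{σ_{k-1}+j-1}/Π_{σ_{k-1}}) Q_{σ_{k-1}+j} and Π_n = M₁⋯M_n. -/

import Mathlib

lemma aux_ptwise (M Q : ℕ → ℝ) (hM : ∀ n, 0 < M n) (hQ : ∀ n, 0 ≤ Q n)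
    (c γ : ℝ) (hγ : γ = Real.exp (-c))
    (S : ℕ → ℝ) (hS : ∀ n, S n = ∑ k ∈ Finset.Icc 1 n, Real.log (M k))
    (P : ℕ → ℝ) (hP : ∀ n, P n = ∏ j ∈ Finset.Icc 1 n, M j)
    (σ : ℕ → ℕ) (hσ0 : σ 0 = 0)
    (hσ : ∀ n, σ n < σ (n+1) ∧ S (σ (n+1)) + c * σ (n+1) < S (σ n) + c * σ n)
    (Qstar : ℕ → ℝ)
    (hQstar : ∀ k, Qstar k = ∑ j ∈ Finset.Icc 1 (σ k - σ (k-1)),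
      (P (σ (k-1) + j - 1) / P (σ (k-1))) * Q (σ (k-1) + j)) :
    ∀ n, ∑ k ∈ Finset.Icc 1 (σ n), P (k-1) * Q k ≤
      ∑ k ∈ Finset.Icc 1 n, γ ^ (σ (k-1)) * Qstar k := by
  have hPpos : ∀ n, 0 < P n := fun n => by
    rw [hP]; exact Finset.prod_pos (fun j _ => hM j)
  have hSP : ∀ n, S n = Real.log (P n) := fun n => by
    rw [hS, hP, Real.log_prod (fun j _ => (hM j).ne')]
  have hSneg : ∀ m, S (σ m) + c * σ m ≤ 0 := by
    intro m
    induction m with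
    | zero => simp [hσ0, hS]
    | succ m ih => exact le_of_lt (lt_of_lt_of_le (hσ m).2 ih)
  have hPle : ∀ m, P (σ m) ≤ γ ^ (σ m) := by
    intro m
    have h1 : P (σ m) = Real.exp (S (σ m)) := by rw [hSP, Real.exp_log (hPpos _)]
    have h2 : γ ^ (σ m) = Real.exp (-c * σ m) := by
      rw [hγ, ← Real.exp_nat_mul]; ring_nf
    rw [h1, h2]
    exact Real.exp_le_exp.2 (by nlinarith [hSneg m])
  have htel : ∀ n, ∑ k ∈ Finset.Icc 1 (σ n), P (k-1) * Q k =
      ∑ k ∈ Finset.Icc 1 n, P (σ (k-1)) * Qstar k := by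
    intro n
    induction n with
    | zero => simp [hσ0]
    | succ n ih =>
      have hmono : σ n ≤ σ (n+1) := (hσ n).1.le
      have hsplit : ∑ k ∈ Finset.Icc 1 (σ (n+1)), P (k-1) * Q k =
          (∑ k ∈ Finset.Icc 1 (σ n), P (k-1) * Q k) +
          ∑ k ∈ Finset.Ioc (σ n) (σ (n+1)), P (k-1) * Q k := by
        rw [show Finset.Icc 1 (σ (n+1)) = Finset.Ioc 0 (σ (n+1)) by
              rw [← Finset.Icc_add_one_left_eq_Ioc, zero_add],
            show Finset.Icc 1 (σ n) = Finset.Ioc 0 (σ n) by rw [← Finset.Icc_add_one_left_eq_Ioc, zero_add],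
            Finset.sum_Ioc_consecutive _ (Nat.zero_le _) hmono]
      have hreindex : ∑ k ∈ Finset.Ioc (σ n) (σ (n+1)), P (k-1) * Q k =
          ∑ j ∈ Finset.Icc 1 (σ (n+1) - σ n), P (σ n + j - 1) * Q (σ n + j) := by
        rw [show Finset.Icc 1 (σ (n+1) - σ n) = Finset.Ioc 0 (σ (n+1) - σ n) by
              rw [← Finset.Icc_add_one_left_eq_Ioc, zero_add]]
        rw [show Finset.Ioc (σ n) (σ (n+1)) =
            Finset.map (addLeftEmbedding (σ n)) (Finset.Ioc 0 (σ (n+1) - σ n)) by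
          rw [Finset.map_add_left_Ioc]
          congr 1 <;> omega]
        rw [Finset.sum_map]
        rfl
      rw [hsplit, ih, Finset.sum_Icc_succ_top (by omega : 1 ≤ n + 1)]
      congr 1
      rw [hreindex]
      have : P (σ ((n+1)-1)) * Qstar (n+1) =
          ∑ j ∈ Finset.Icc 1 (σ (n+1) - σ n), P (σ n + j - 1) * Q (σ n + j) := by
        rw [hQstar]
        simp only [Nat.add_sub_cancel]
        rw [Finset.mul_sum]
        refine Finset.sum_congr rfl (fun j _ => ?_)
        rw [div_eq_mul_inv, show P (σ n) * (P (σ n + j - 1) * (P (σ n))⁻¹ * Q (σ n + j))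
            = (P (σ n) * (P (σ n))⁻¹) * (P (σ n + j - 1) * Q (σ n + j)) from by ring,
          mul_inv_cancel₀ (hPpos _).ne', one_mul]
      rw [this]
  intro n
  rw [htel n]
  refine Finset.sum_le_sum (fun k _ => ?_)
  have hQs : 0 ≤ Qstar k := by
    rw [hQstar]
    exact Finset.sum_nonneg fun j _ =>
      mul_nonneg (div_nonneg (hPpos _).le (hPpos _).le) (hQ _)
  exact mul_le_mul_of_nonneg_right (hPle _) hQs


open MeasureTheory ProbabilityTheory Filter

theorem stmt_9 {Ω : Type*} [MeasureSpace Ω] [IsProbabilityMeasure (ℙ : Measure Ω)]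
    (M Q : ℕ → Ω → ℝ)
    (hmeas : ∀ n, Measurable (fun ω => (M n ω, Q n ω)))
    (hindep : iIndepFun (fun n ω => (M n ω, Q n ω)) ℙ)
    (hident : ∀ n, IdentDistrib (fun ω => (M n ω, Q n ω)) (fun ω => (M 1 ω, Q 1 ω)) ℙ ℙ)
    (hM0 : ∀ n ω, 0 ≤ M n ω) (hQ0 : ∀ n ω, 0 ≤ Q n ω)
    (hMne0 : ℙ {ω | M 1 ω = 0} = 0)
    (c γ : ℝ) (hc : 0 ≤ c) (hγ : γ = Real.exp (-c))
    (S : ℕ → Ω → ℝ) (hS : ∀ n ω, S n ω = ∑ k ∈ Finset.Icc 1 n, Real.log (M k ω))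
    (P : ℕ → Ω → ℝ) (hP : ∀ n ω, P n ω = ∏ j ∈ Finset.Icc 1 n, M j ω)
    (σ : ℕ → Ω → ℕ) (hσ0 : ∀ ω, σ 0 ω = 0)
    (hσ : ∀ n ω, σ (n + 1) ω =
      sInf {k : ℕ | σ n ω < k ∧ S k ω + c * k < S (σ n ω) ω + c * (σ n ω)})
    (hσfin : ∀ᵐ ω ∂ℙ, ∀ n : ℕ,
      {k : ℕ | σ n ω < k ∧ S k ω + c * k < S (σ n ω) ω + c * (σ n ω)}.Nonempty)
    (Qstar : ℕ → Ω → ℝ)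
    (hQstar : ∀ k ω, Qstar k ω = ∑ j ∈ Finset.Icc 1 (σ k ω - σ (k - 1) ω),
      (P (σ (k - 1) ω + j - 1) ω / P (σ (k - 1) ω) ω) * Q (σ (k - 1) ω + j) ω) :
    ∀ᵐ ω ∂ℙ, ∀ n : ℕ,
      ∑ k ∈ Finset.Icc 1 (σ n ω), P (k - 1) ω * Q k ω ≤
        ∑ k ∈ Finset.Icc 1 n, γ ^ (σ (k - 1) ω) * Qstar k ω := by
  have hzero : ∀ n, (ℙ : Measure Ω) {ω | M n ω = 0} = 0 := by
    intro n
    have hs : MeasurableSet {p : ℝ × ℝ | p.1 = 0} :=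
      (measurableSet_singleton 0).preimage measurable_fst
    have h := (hident n).measure_mem_eq hs
    simpa using h.trans (by simpa using hMne0)
  have hMposae : ∀ᵐ ω ∂(ℙ : Measure Ω), ∀ n, 0 < M n ω := by
    have hne : ∀ᵐ ω ∂(ℙ : Measure Ω), ∀ n, M n ω ≠ 0 :=
      ae_all_iff.2 fun n => by
        rw [ae_iff]; simpa using hzero n
    filter_upwards [hne] with ω h n
    exact lt_of_le_of_ne (hM0 n ω) (Ne.symm (h n))
  filter_upwards [hσfin, hMposae] with ω hfin hMpos
  refine aux_ptwise (fun n => M n ω) (fun n => Q n ω) hMpos (fun n => hQ0 n ω) c γ hγ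
    (fun n => S n ω) (fun n => hS n ω) (fun n => P n ω) (fun n => hP n ω)
    (fun n => σ n ω) (hσ0 ω) (fun n => ?_) (fun k => Qstar k ω) (fun k => hQstar k ω)
  have hm := (hσ n ω) ▸ Nat.sInf_mem (hfin n)
  exact ⟨hm.1, hm.2⟩
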